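/- arXiv:math/0204300 — 3 statements merged into one kernel-verified Lean document; each statement's English description precedes it below -/
import Mathlib

section
/- Fix n ≥ 1 and Schur parameters a_1, …, a_n with |a_j| ≠ 1. For t ∈ ℝ set a_j(t) := e^{it} a_j for all j; let φ_j^t be the monic polynomials generated by the recurrence with parameters a_j(t), and φ̂_j^t := κ_j φ_j^t (the quantities ρ_j, ε_j, κ_j, e_j are unchanged by the perturbation since |a_j(t)| = |a_j|), and K_{n−1}^t(z,y) := Σ_{j=0}^{n−1} e_j φ̂_j^t(z) conj(φ̂_j^t(y)). Let I ⊆ ℝ be an open interval and λ : I → ℂ differentiable with φ_n^t(λ(t)) = 0 and λ(t) ≠ 0 for all t ∈ I. Then for all t ∈ I: K_{n−1}^t(λ(t), conj(λ(t))^{−1}) · λ'(t) = i · λ(t); in particular, if K_{n−1}^t(λ(t), conj(λ(t))^{−1}) ≠ 0 then λ'(t) = i λ(t) / K_{n−1}^t(λ(t), conj(λ(t))^{−1}). -/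
open LaurentPolynomial Polynomial Complex ComplexConjugate

noncomputable section

/-- Reversed polynomial with conjugated coefficients: p*(z) = Σ conj(c_{m-k}) z^k. -/
def revc (p : Polynomial ℂ) : Polynomial ℂ := (p.map (starRingEnd ℂ)).reverse

/-- Monic orthogonal polynomials from Schur parameters: φ_0 = 1,
φ_n = z φ_{n-1} + a_n φ*_{n-1}. -/
def phi (a : ℕ → ℂ) : ℕ → Polynomial ℂ
  | 0 => 1
  | n + 1 => X * phi a n + Polynomial.C (a (n + 1)) * revc (phi a n)

/-- ρ_n := |1 - |a_n|²|^{1/2}. -/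
def rho (a : ℕ → ℂ) (n : ℕ) : ℝ := Real.sqrt |1 - ‖a n‖ ^ 2|

/-- ε_n := sgn (1 - |a_n|²). -/
def sgn (a : ℕ → ℂ) (n : ℕ) : ℝ := Real.sign (1 - ‖a n‖ ^ 2)

/-- ρ̂_n := ε_n ρ_n. -/
def rhoh (a : ℕ → ℂ) (n : ℕ) : ℝ := sgn a n * rho a n

/-- κ_n := Π_{k=1}^n ρ_k⁻¹ (κ_0 = 1). -/
def kap (a : ℕ → ℂ) (n : ℕ) : ℝ := ∏ k ∈ Finset.Icc 1 n, (rho a k)⁻¹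

/-- e_n := Π_{k=1}^n ε_k (e_0 = 1). -/
def esgn (a : ℕ → ℂ) (n : ℕ) : ℝ := ∏ k ∈ Finset.Icc 1 n, sgn a k

/-- Orthonormal polynomials φ̂_n := κ_n φ_n. -/
def phin (a : ℕ → ℂ) (n : ℕ) : Polynomial ℂ := Polynomial.C ((kap a n : ℝ) : ℂ) * phi a n

/-- Standard right orthonormal Laurent polynomials:
χ_{2m} = z^{-m} φ̂*_{2m}, χ_{2m+1} = z^{-m} φ̂_{2m+1}. -/
def chi (a : ℕ → ℂ) (n : ℕ) : LaurentPolynomial ℂ :=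
  T (-((n / 2 : ℕ) : ℤ)) * (if Even n then revc (phin a n) else phin a n).toLaurent

/-- The kernel K_n(z,y) := Σ_{k=0}^n e_k φ̂_k(z) conj(φ̂_k(y)). -/
def Kker (a : ℕ → ℂ) (n : ℕ) (z y : ℂ) : ℂ :=
  ∑ k ∈ Finset.range (n + 1),
    ((esgn a k : ℝ) : ℂ) * (phin a k).eval z * conj ((phin a k).eval y)

/-- Entries of the five-diagonal matrix, with rows/columns indexed from 1. -/
def Fent (a : ℕ → ℂ) (i j : ℕ) : ℂ :=
  if i = 1 then
    if j = 1 then -a 1 else if j = 2 then (rho a 1 : ℂ) else 0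
  else if i % 2 = 0 then
    if j + 1 = i then -(rhoh a (i - 1) : ℂ) * a i
    else if j = i then -conj (a (i - 1)) * a i
    else if j = i + 1 then -(rho a i : ℂ) * a (i + 1)
    else if j = i + 2 then (rho a i : ℂ) * (rho a (i + 1) : ℂ)
    else 0
  else
    if j + 2 = i then (rhoh a (i - 2) : ℂ) * (rhoh a (i - 1) : ℂ)
    else if j + 1 = i then conj (a (i - 2)) * (rhoh a (i - 1) : ℂ)
    else if j = i then -conj (a (i - 1)) * a i
    else if j = i + 1 then conj (a (i - 1)) * (rho a i : ℂ)
    else 0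

/-- The n×n five-diagonal matrix ℱ_n. -/
def Fmat (a : ℕ → ℂ) (n : ℕ) : Matrix (Fin n) (Fin n) ℂ :=
  Matrix.of fun i j => Fent a (i.val + 1) (j.val + 1)

/-- Evaluation of a Laurent polynomial at a nonzero complex number. -/
def levalAt (z : ℂ) (f : LaurentPolynomial ℂ) : ℂ :=
  Finsupp.sum f.coeff fun k c => c * z ^ k

/-- Orthonormal polynomials for the perturbed parameters `b`, with the normalization
constants κ_j taken from the unperturbed parameters `a` (they are unchanged by a
rotation of the parameters). -/
def phinPert (a b : ℕ → ℂ) (j : ℕ) : Polynomial ℂ :=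
  Polynomial.C ((kap a j : ℝ) : ℂ) * phi b j

/-- The perturbed kernel K_m(z,y) = Σ_{j=0}^m e_j φ̂_j^t(z) conj(φ̂_j^t(y)), with e_j taken
from the unperturbed parameters. -/
def KkerPert (a b : ℕ → ℂ) (m : ℕ) (z y : ℂ) : ℂ :=
  ∑ j ∈ Finset.range (m + 1),
    ((esgn a j : ℝ) : ℂ) * (phinPert a b j).eval z * conj ((phinPert a b j).eval y)

/-- Simultaneous rotation of all Schur parameters: a_j ↦ e^{it} a_j. -/
def aRotAll (a : ℕ → ℂ) (t : ℝ) : ℕ → ℂ :=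
  fun j => Complex.exp (Complex.I * t) * a j

lemma reflect_reflect' (N : ℕ) (p : ℂ[X]) : reflect N (reflect N p) = p := by
  ext i; simp [coeff_reflect]

lemma natDegree_reflect_le {p : ℂ[X]} {N : ℕ} (h : p.natDegree ≤ N) :
    (reflect N p).natDegree ≤ N := by
  rw [natDegree_le_iff_coeff_eq_zero] at h ⊢
  intro m hm
  rw [coeff_reflect, revAt_eq_self_of_lt hm]
  exact h m hm

lemma reflect_succ' {p : ℂ[X]} {n : ℕ} (h : p.natDegree ≤ n) :
    reflect (n+1) p = X * reflect n p := by
  have h1 := reflect_mul (1 : ℂ[X]) p (F := 1) (by simp) h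
  rw [one_mul, show 1 + n = n + 1 by ring] at h1
  rw [h1]
  congr 1
  rw [show (1 : ℂ[X]) = Polynomial.C 1 by simp, reflect_C]
  simp

lemma reflect_X_mul {q : ℂ[X]} {n : ℕ} (h : q.natDegree ≤ n) :
    reflect (n+1) (X * q) = reflect n q := by
  have h1 := reflect_mul (X : ℂ[X]) q (F := 1) (natDegree_X_le) h
  rw [show 1 + n = n + 1 by ring] at h1
  rw [h1, show reflect 1 (X:ℂ[X]) = 1 by rw [show (X:ℂ[X]) = X^1 by ring, reflect_monomial]; simp]
  simp

lemma conj_conj_map (p : ℂ[X]) : (p.map (starRingEnd ℂ)).map (starRingEnd ℂ) = p := by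
  rw [map_map]
  have : (starRingEnd ℂ).comp (starRingEnd ℂ) = RingHom.id ℂ := by
    ext z; simp
  simp [this]

lemma reflect_map (N : ℕ) (p : ℂ[X]) :
    (reflect N p).map (starRingEnd ℂ) = reflect N (p.map (starRingEnd ℂ)) := by
  ext i; simp [coeff_reflect, coeff_map]

lemma phi_monic (b : ℕ → ℂ) : ∀ n, (phi b n).Monic ∧ (phi b n).natDegree = n := by
  intro n
  induction n with
  | zero => exact ⟨monic_one, natDegree_one⟩
  | succ n ih =>
    obtain ⟨hm, hd⟩ := ih
    have hXm : (X * phi b n).Monic := monic_X.mul hm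
    have hXd : (X * phi b n).natDegree = n + 1 := by
      rw [natDegree_X_mul hm.ne_zero, hd]
    have hrd : (revc (phi b n)).natDegree ≤ n := by
      unfold revc
      exact le_trans (reverse_natDegree_le _) (le_trans natDegree_map_le hd.le)
    have h1 : (Polynomial.C (b (n+1)) * revc (phi b n)).natDegree ≤ n :=
      le_trans (natDegree_C_mul_le _ _) hrd
    have hlt : (Polynomial.C (b (n+1)) * revc (phi b n)).degree < (X * phi b n).degree := by
      have h2 : (Polynomial.C (b (n+1)) * revc (phi b n)).degree ≤ (n : WithBot ℕ) :=
        degree_le_natDegree.trans (by exact_mod_cast h1)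
      rw [degree_eq_natDegree hXm.ne_zero, hXd]
      exact lt_of_le_of_lt h2 (by exact_mod_cast Nat.lt_succ_self n)
    constructor
    · exact hXm.add_of_left hlt
    · show (X * phi b n + Polynomial.C (b (n+1)) * revc (phi b n)).natDegree = n + 1
      rw [natDegree_add_eq_left_of_degree_lt hlt, hXd]

lemma revc_phi_succ (b : ℕ → ℂ) (n : ℕ) :
    revc (phi b (n+1)) = revc (phi b n) + Polynomial.C (conj (b (n+1))) * (X * phi b n) := by
  obtain ⟨hm, hd⟩ := phi_monic b n
  obtain ⟨hm1, hd1⟩ := phi_monic b (n+1)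
  have hq : ((phi b n).map (starRingEnd ℂ)).natDegree = n := by
    rw [hm.natDegree_map]; exact hd
  have hmap : (phi b (n+1)).map (starRingEnd ℂ) =
      X * (phi b n).map (starRingEnd ℂ) + Polynomial.C (conj (b (n+1))) * reflect n (phi b n) := by
    show (X * phi b n + Polynomial.C (b (n+1)) * revc (phi b n)).map (starRingEnd ℂ) = _
    rw [Polynomial.map_add, Polynomial.map_mul, Polynomial.map_mul, map_X, map_C]
    congr 1
    congr 1
    unfold revc
    rw [reverse, hq, reflect_map, conj_conj_map]
  have hrevdeg : (reflect n (phi b n)).natDegree ≤ n := natDegree_reflect_le hd.le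
  unfold revc
  have hq1 : ((phi b (n+1)).map (starRingEnd ℂ)).natDegree = n + 1 := by
    rw [hm1.natDegree_map]; exact hd1
  rw [reverse, hq1, hmap, reflect_add, reflect_C_mul,
    reflect_X_mul (le_of_eq hq), reflect_succ' hrevdeg, reflect_reflect', reverse, hq]

lemma eval_map_conj (p : ℂ[X]) (w : ℂ) :
    (p.map (starRingEnd ℂ)).eval w = conj (p.eval (conj w)) := by
  rw [eval_map, show (starRingEnd ℂ) ((p.eval (conj w))) = eval₂ ((starRingEnd ℂ).comp (RingHom.id ℂ)) ((starRingEnd ℂ) (conj w)) p from hom_eval₂ p (RingHom.id ℂ) (starRingEnd ℂ) (conj w)]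
  simp

lemma revc_eval {p : ℂ[X]} (hm : p.Monic) {z : ℂ} (hz : z ≠ 0) :
    (revc p).eval z = z ^ p.natDegree * conj (p.eval ((conj z)⁻¹)) := by
  have hinv : Invertible (z⁻¹) := ⟨z, by field_simp, by field_simp⟩
  have hq : (p.map (starRingEnd ℂ)).natDegree = p.natDegree := hm.natDegree_map _
  have h := eval₂_reflect_mul_pow (RingHom.id ℂ) (z⁻¹) p.natDegree
      (p.map (starRingEnd ℂ)) hq.le
  have hiz : (⅟ (z⁻¹) : ℂ) = z := invOf_eq_right_inv (by field_simp)
  rw [hiz] at h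
  have h2 : (revc p).eval z * (z⁻¹) ^ p.natDegree = (p.map (starRingEnd ℂ)).eval (z⁻¹) := by
    simpa [revc, reverse, hq, eval₂_eq_eval_map] using h
  rw [eval_map_conj, map_inv₀] at h2
  have : (revc p).eval z * (z⁻¹) ^ p.natDegree * z ^ p.natDegree
      = z ^ p.natDegree * conj (p.eval ((conj z)⁻¹)) := by rw [h2]; ring
  rwa [mul_assoc, inv_pow, inv_mul_cancel₀ (pow_ne_zero _ hz), mul_one] at this


/-- the combined real normalization scalar -/
def cfac (a : ℕ → ℂ) (n : ℕ) : ℝ := esgn a n * (kap a n)^2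

lemma sign_sq_fac {x : ℝ} (hx : x ≠ 0) : Real.sign x * (Real.sqrt |x|)⁻¹^2 * x = 1 := by
  have h1 : (Real.sqrt |x|)^2 = |x| := Real.sq_sqrt (abs_nonneg x)
  have h2 : Real.sign x * x = |x| := by
    rcases lt_or_gt_of_ne hx with h | h
    · rw [Real.sign_of_neg h, abs_of_neg h]; ring
    · rw [Real.sign_of_pos h, abs_of_pos h]; ring
  have h3 : |x| ≠ 0 := abs_ne_zero.mpr hx
  rw [inv_pow, h1]
  field_simp
  linarith [h2]

lemma cfac_succ {a : ℕ → ℂ} {n : ℕ} (ha : ‖a (n+1)‖ ≠ 1) :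
    cfac a (n+1) * (1 - ‖a (n+1)‖ ^ 2) = cfac a n := by
  have hx : 1 - ‖a (n+1)‖ ^ 2 ≠ 0 := by
    intro h
    apply ha
    have h2 : ‖a (n+1)‖ ^ 2 = 1 := by linarith
    have := abs_nonneg (a := ‖a (n+1)‖)
    nlinarith [norm_nonneg (a (n+1))]
  unfold cfac esgn kap
  rw [Finset.prod_Icc_succ_top (Nat.le_add_left 1 n), Finset.prod_Icc_succ_top (Nat.le_add_left 1 n), mul_pow]
  have h := sign_sq_fac hx
  unfold sgn rho
  linear_combination ((∏ k ∈ Finset.Icc 1 n, Real.sign (1 - ‖a k‖ ^ 2)) * (∏ k ∈ Finset.Icc 1 n, (Real.sqrt |1 - ‖a k‖ ^ 2|)⁻¹)^2) * h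

lemma revc_one : revc (1 : ℂ[X]) = 1 := by
  unfold revc
  rw [Polynomial.map_one]
  ext i
  rcases i with _ | i
  · simp [coeff_reverse]
  · simp [coeff_reverse, revAt_eq_self_of_lt (Nat.succ_pos i)]

lemma CD (a b : ℕ → ℂ) (habs : ∀ k, ‖b k‖ = ‖a k‖) (y : ℂ) :
    ∀ n, (∀ j, 1 ≤ j → j ≤ n → ‖a j‖ ≠ 1) →
    (1 - Polynomial.C (conj y) * X) *
      ∑ k ∈ Finset.range n, Polynomial.C ((cfac a k : ℝ) * conj ((phi b k).eval y)) * phi b k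
    = Polynomial.C ((cfac a n : ℝ) : ℂ) *
        (Polynomial.C (conj ((revc (phi b n)).eval y)) * revc (phi b n)
          - Polynomial.C (conj ((phi b n).eval y)) * phi b n) := by
  intro n
  induction n with
  | zero =>
    intro _
    simp [cfac, esgn, kap, revc_one, phi]
  | succ n ih =>
    intro ha
    have ihh := ih (fun j h1 h2 => ha j h1 (h2.trans (Nat.le_succ n)))
    rw [Finset.sum_range_succ, mul_add, ihh]
    -- abbreviations
    set F := phi b n with hF
    set R := revc (phi b n) with hR
    have hFs : phi b (n+1) = X * F + Polynomial.C (b (n+1)) * R := rfl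
    have hRs : revc (phi b (n+1)) = R + Polynomial.C (conj (b (n+1))) * (X * F) := revc_phi_succ b n
    have hfy : (phi b (n+1)).eval y = y * F.eval y + b (n+1) * R.eval y := by
      rw [hFs]; simp [eval_mul, eval_add]
    have hry : (revc (phi b (n+1))).eval y = R.eval y + conj (b (n+1)) * (y * F.eval y) := by
      rw [hRs]; simp [eval_mul, eval_add]
    have hbb : b (n+1) * conj (b (n+1)) = ((‖a (n+1)‖ ^ 2 : ℝ) : ℂ) := by
      rw [Complex.mul_conj, ← habs, Complex.sq_norm]
    have hc := cfac_succ (a := a) (n := n) (ha (n+1) (Nat.le_add_left 1 n) le_rfl)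
    have hcC : (Polynomial.C ((cfac a (n+1) : ℝ) : ℂ)) * (1 - Polynomial.C (b (n+1)) * Polynomial.C (conj (b (n+1)))) = Polynomial.C ((cfac a n : ℝ) : ℂ) := by
      rw [← map_mul, hbb, ← map_one (Polynomial.C : ℂ →+* ℂ[X]), ← map_sub, ← map_mul]
      congr 1
      exact_mod_cast hc
    rw [hry, hRs, hfy, hFs]
    simp only [map_add, map_mul, Complex.conj_conj]
    linear_combination (-(Polynomial.C ((starRingEnd ℂ) (eval y R)) * R) + Polynomial.C ((starRingEnd ℂ) y) * X * Polynomial.C ((starRingEnd ℂ) (eval y F)) * F) * hcC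

lemma CD_at_root (a b : ℕ → ℂ) (habs : ∀ k, ‖b k‖ = ‖a k‖)
    (n : ℕ) (ha : ∀ j, 1 ≤ j → j ≤ n → ‖a j‖ ≠ 1)
    {lam : ℂ} (hlam : lam ≠ 0) (hroot : (phi b n).eval lam = 0) :
    (∑ k ∈ Finset.range n,
        ((cfac a k : ℝ) : ℂ) * (phi b k).eval lam * conj ((phi b k).eval ((conj lam)⁻¹))) * lam ^ n
    = ((cfac a n : ℝ) : ℂ) * lam * (revc (phi b n)).eval lam
        * ((derivative (phi b n)).eval lam) := by
  set y : ℂ := (conj lam)⁻¹ with hy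
  have hy0 : y ≠ 0 := inv_ne_zero (by simpa using hlam)
  have hcy : conj y = lam⁻¹ := by rw [hy, map_inv₀, Complex.conj_conj]
  obtain ⟨hm, hd⟩ := phi_monic b n
  -- conj evals
  have hRy : (revc (phi b n)).eval y = 0 := by
    rw [revc_eval hm hy0, hd]
    have : (conj y)⁻¹ = lam := by rw [hcy, inv_inv]
    rw [this, hroot]
    simp
  have hRlam : (revc (phi b n)).eval lam = lam ^ n * conj ((phi b n).eval y) := by
    rw [revc_eval hm hlam, hd]
  -- differentiate the CD identity
  have hCD := CD a b habs y n ha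
  have hder := congrArg (fun p : ℂ[X] => (derivative p).eval lam) hCD
  simp only [derivative_mul, derivative_sub, derivative_one, derivative_C, derivative_X,
    eval_add, eval_mul, eval_sub, eval_one, eval_C, eval_X, zero_mul, mul_one, zero_sub,
    mul_zero, zero_add, add_zero, sub_zero] at hder
  rw [hRy] at hder
  -- 1 - conj y * lam = 0
  have hfac : (1 : ℂ) - conj y * lam = 0 := by
    rw [hcy, inv_mul_cancel₀ hlam]; ring
  rw [hfac, zero_mul, add_zero, map_zero, zero_mul, zero_sub, eval_neg, eval_C,
    eval_finset_sum] at hder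
  simp only [eval_mul, eval_C] at hder
  rw [hcy] at hder
  have hsum : ∑ k ∈ Finset.range n, (((cfac a k : ℝ) : ℂ) * conj ((phi b k).eval y)) * (phi b k).eval lam
      = ∑ k ∈ Finset.range n, ((cfac a k : ℝ) : ℂ) * (phi b k).eval lam * conj ((phi b k).eval y) := by
    apply Finset.sum_congr rfl; intros; ring
  rw [hsum] at hder
  rw [hRlam]
  have hl : lam⁻¹ * lam = 1 := inv_mul_cancel₀ hlam
  linear_combination (-(lam ^ (n+1))) * hder +
    (-(lam ^ n) * ∑ k ∈ Finset.range n, ((cfac a k : ℝ) : ℂ) * (phi b k).eval lam * conj ((phi b k).eval y)) * hl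


/-- formal t-derivatives (P_n, Q_n) of (φ_n, φ*_n) under b ↦ e^{it} b. -/
def Pd (b : ℕ → ℂ) : ℕ → Polynomial ℂ × Polynomial ℂ
  | 0 => (0, 0)
  | n + 1 =>
    ((X : ℂ[X]) * (Pd b n).1 + Polynomial.C (Complex.I * b (n+1)) * revc (phi b n)
        + Polynomial.C (b (n+1)) * (Pd b n).2,
      (Pd b n).2 + Polynomial.C (-Complex.I * conj (b (n+1))) * (X * phi b n)
        + Polynomial.C (conj (b (n+1))) * (X * (Pd b n).1))

lemma U_identity (b : ℕ → ℂ) (n : ℕ) :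
    revc (phi b n) * (Pd b n).1 - phi b n * (Pd b n).2
      - Polynomial.C Complex.I * phi b n * revc (phi b n)
    = Polynomial.C (-Complex.I * ∏ k ∈ Finset.Icc 1 n, (1 - b k * conj (b k))) * X ^ n := by
  induction n with
  | zero =>
    show revc (phi b 0) * 0 - phi b 0 * 0 - Polynomial.C Complex.I * phi b 0 * revc (phi b 0) = _
    rw [show phi b 0 = 1 from rfl, revc_one]
    simp
  | succ n ih =>
    have hFs : phi b (n+1) = X * phi b n + Polynomial.C (b (n+1)) * revc (phi b n) := rfl
    have hRs : revc (phi b (n+1)) = revc (phi b n) + Polynomial.C (conj (b (n+1))) * (X * phi b n) :=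
      revc_phi_succ b n
    have hP : (Pd b (n+1)).1 = (X : ℂ[X]) * (Pd b n).1 + Polynomial.C (Complex.I * b (n+1)) * revc (phi b n)
        + Polynomial.C (b (n+1)) * (Pd b n).2 := rfl
    have hQ : (Pd b (n+1)).2 = (Pd b n).2 + Polynomial.C (-Complex.I * conj (b (n+1))) * (X * phi b n)
        + Polynomial.C (conj (b (n+1))) * (X * (Pd b n).1) := rfl
    rw [hRs, hP, hQ, hFs, Finset.prod_Icc_succ_top (Nat.le_add_left 1 n), pow_succ]
    simp only [map_mul, map_sub, map_one, map_neg] at ih ⊢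
    linear_combination ((1 - Polynomial.C (b (n+1)) * Polynomial.C (conj (b (n+1)))) * X) * ih


lemma hasDerivAt_phi (a : ℕ → ℂ) (lam : ℝ → ℂ) {t₀ : ℝ} {L : ℂ} (hL : HasDerivAt lam L t₀) :
    ∀ n, HasDerivAt (fun t => (phi (aRotAll a t) n).eval (lam t))
      ((Pd (aRotAll a t₀) n).1.eval (lam t₀)
        + (derivative (phi (aRotAll a t₀) n)).eval (lam t₀) * L) t₀
    ∧ HasDerivAt (fun t => (revc (phi (aRotAll a t) n)).eval (lam t))
      ((Pd (aRotAll a t₀) n).2.eval (lam t₀)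
        + (derivative (revc (phi (aRotAll a t₀) n))).eval (lam t₀) * L) t₀ := by
  intro n
  induction n with
  | zero =>
    constructor
    · have h1 : (fun t => (phi (aRotAll a t) 0).eval (lam t)) = fun _ => (1:ℂ) := by
        funext t; show (phi (aRotAll a t) 0).eval (lam t) = 1
        rw [show phi (aRotAll a t) 0 = 1 from rfl]; simp
      rw [h1, show phi (aRotAll a t₀) 0 = 1 from rfl]
      show HasDerivAt _ ((Pd (aRotAll a t₀) 0).1.eval (lam t₀) + (derivative (1:ℂ[X])).eval (lam t₀) * L) t₀
      rw [show (Pd (aRotAll a t₀) 0).1 = 0 from rfl]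
      simp only [eval_zero, derivative_one, zero_mul, add_zero, zero_add, mul_zero]
      exact hasDerivAt_const t₀ 1
    · have h1 : (fun t => (revc (phi (aRotAll a t) 0)).eval (lam t)) = fun _ => (1:ℂ) := by
        funext t; rw [show phi (aRotAll a t) 0 = 1 from rfl, revc_one]; simp
      rw [h1, show phi (aRotAll a t₀) 0 = 1 from rfl, revc_one]
      rw [show (Pd (aRotAll a t₀) 0).2 = 0 from rfl]
      simp only [eval_zero, derivative_one, zero_mul, add_zero, zero_add, mul_zero]
      exact hasDerivAt_const t₀ 1
  | succ n ih =>
    obtain ⟨ihf, ihg⟩ := ih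
    have hcoer : HasDerivAt (fun t : ℝ => (t : ℂ)) 1 t₀ := by
      simpa using (hasDerivAt_id t₀).ofReal_comp
    have hexp : HasDerivAt (fun t : ℝ => Complex.exp (Complex.I * t))
        (Complex.I * Complex.exp (Complex.I * t₀)) t₀ := by
      have := ((hcoer.const_mul Complex.I).cexp)
      simpa [mul_comm] using this
    have hexp2 : HasDerivAt (fun t : ℝ => Complex.exp (-Complex.I * t))
        (-Complex.I * Complex.exp (-Complex.I * t₀)) t₀ := by
      have := ((hcoer.const_mul (-Complex.I)).cexp)
      simpa [mul_comm] using this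
    constructor
    · have hfun : (fun t => (phi (aRotAll a t) (n+1)).eval (lam t))
          = fun t => lam t * (phi (aRotAll a t) n).eval (lam t)
            + (Complex.exp (Complex.I * t) * a (n+1)) * (revc (phi (aRotAll a t) n)).eval (lam t) := by
        funext t
        rw [show phi (aRotAll a t) (n+1) = X * phi (aRotAll a t) n
          + Polynomial.C (aRotAll a t (n+1)) * revc (phi (aRotAll a t) n) from rfl]
        simp [aRotAll]
      rw [hfun]
      have hd := (hL.mul ihf).add (((hexp.mul_const (a (n+1)))).mul ihg)
      convert hd using 1
      · rfl
      · rfl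
      rw [show (Pd (aRotAll a t₀) (n+1)).1 = (X : ℂ[X]) * (Pd (aRotAll a t₀) n).1
          + Polynomial.C (Complex.I * aRotAll a t₀ (n+1)) * revc (phi (aRotAll a t₀) n)
          + Polynomial.C (aRotAll a t₀ (n+1)) * (Pd (aRotAll a t₀) n).2 from rfl,
        show phi (aRotAll a t₀) (n+1) = X * phi (aRotAll a t₀) n
          + Polynomial.C (aRotAll a t₀ (n+1)) * revc (phi (aRotAll a t₀) n) from rfl]
      simp only [derivative_add, derivative_mul, derivative_X, derivative_C, eval_add, eval_mul,
        eval_X, eval_C, one_mul, zero_mul, add_zero, zero_add, aRotAll]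
      ring
    · have hfun : (fun t => (revc (phi (aRotAll a t) (n+1))).eval (lam t))
          = fun t => (revc (phi (aRotAll a t) n)).eval (lam t)
            + (Complex.exp (-Complex.I * t) * conj (a (n+1)))
                * (lam t * (phi (aRotAll a t) n).eval (lam t)) := by
        funext t
        rw [revc_phi_succ]
        have hcj : conj (aRotAll a t (n+1)) = Complex.exp (-Complex.I * t) * conj (a (n+1)) := by
          rw [show aRotAll a t (n+1) = Complex.exp (Complex.I * t) * a (n+1) from rfl, map_mul,
            ← Complex.exp_conj]
          congr 2
          simp
        simp [hcj]
      rw [hfun]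
      have hd := ihg.add (((hexp2.mul_const (conj (a (n+1))))).mul (hL.mul ihf))
      convert hd using 1
      · rfl
      · rfl
      rw [show (Pd (aRotAll a t₀) (n+1)).2 = (Pd (aRotAll a t₀) n).2
          + Polynomial.C (-Complex.I * conj (aRotAll a t₀ (n+1))) * (X * phi (aRotAll a t₀) n)
          + Polynomial.C (conj (aRotAll a t₀ (n+1))) * (X * (Pd (aRotAll a t₀) n).1) from rfl,
        revc_phi_succ]
      have hcj : conj (aRotAll a t₀ (n+1)) = Complex.exp (-Complex.I * t₀) * conj (a (n+1)) := by
        rw [show aRotAll a t₀ (n+1) = Complex.exp (Complex.I * t₀) * a (n+1) from rfl, map_mul,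
          ← Complex.exp_conj]
        congr 2
        simp
      simp only [derivative_add, derivative_mul, derivative_X, derivative_C, eval_add, eval_mul,
        eval_X, eval_C, one_mul, zero_mul, add_zero, zero_add, hcj, Pi.mul_apply]
      ring

lemma abs_aRotAll (a : ℕ → ℂ) (t : ℝ) (k : ℕ) :
    ‖aRotAll a t k‖ = ‖a k‖ := by
  simp [aRotAll, map_mul, Complex.norm_exp]

lemma prod_one_sub_conj (a : ℕ → ℂ) (t : ℝ) (n : ℕ) :
    ∏ k ∈ Finset.Icc 1 n, (1 - aRotAll a t k * conj (aRotAll a t k))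
      = (((∏ k ∈ Finset.Icc 1 n, (1 - ‖a k‖ ^ 2) : ℝ) : ℂ)) := by
  push_cast
  apply Finset.prod_congr rfl
  intro k _
  rw [Complex.mul_conj, ← abs_aRotAll a t k]
  norm_cast
  rw [Complex.sq_norm]

lemma cfac_prod (a : ℕ → ℂ) (n : ℕ) (ha : ∀ j, 1 ≤ j → j ≤ n → ‖a j‖ ≠ 1) :
    cfac a n * ∏ k ∈ Finset.Icc 1 n, (1 - ‖a k‖ ^ 2) = 1 := by
  unfold cfac esgn kap
  rw [← Finset.prod_pow, ← Finset.prod_mul_distrib, ← Finset.prod_mul_distrib]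
  rw [Finset.prod_congr rfl (fun k hk => ?_), Finset.prod_const_one]
  rw [Finset.mem_Icc] at hk
  have hx : 1 - ‖a k‖ ^ 2 ≠ 0 := by
    intro h
    apply ha k hk.1 hk.2
    nlinarith [norm_nonneg (a k)]
  exact sign_sq_fac hx


/-- Theorem 4.6: under simultaneous rotation of all Schur parameters,
any differentiable branch of nonzero zeros satisfies
K_{n−1}^t(λ(t), conj(λ(t))⁻¹) · λ'(t) = i λ(t). -/
theorem zero_variation_total_rotation
    (n : ℕ) (hn : 1 ≤ n)
    (a : ℕ → ℂ) (ha : ∀ j, 1 ≤ j → j ≤ n → ‖a j‖ ≠ 1)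
    (α β : ℝ) (lam : ℝ → ℂ)
    (hdiff : ∀ t ∈ Set.Ioo α β, DifferentiableAt ℝ lam t)
    (hroot : ∀ t ∈ Set.Ioo α β, (phi (aRotAll a t) n).eval (lam t) = 0)
    (hne : ∀ t ∈ Set.Ioo α β, lam t ≠ 0) :
    ∀ t ∈ Set.Ioo α β,
      KkerPert a (aRotAll a t) (n - 1) (lam t) ((conj (lam t))⁻¹) * deriv lam t =
          Complex.I * lam t ∧
      (KkerPert a (aRotAll a t) (n - 1) (lam t) ((conj (lam t))⁻¹) ≠ 0 →
        deriv lam t =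
          Complex.I * lam t / KkerPert a (aRotAll a t) (n - 1) (lam t) ((conj (lam t))⁻¹)) := by
  intro t₀ ht
  set b := aRotAll a t₀ with hb
  set lm := lam t₀ with hlm
  set L := deriv lam t₀ with hLdef
  set y : ℂ := (conj lm)⁻¹ with hy
  have hlam0 : lm ≠ 0 := hne t₀ ht
  have hroot0 : (phi b n).eval lm = 0 := hroot t₀ ht
  have hL : HasDerivAt lam L t₀ := (hdiff t₀ ht).hasDerivAt
  have habs : ∀ k, ‖b k‖ = ‖a k‖ := abs_aRotAll a t₀
  -- the kernel equals the CD sum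
  have hK : KkerPert a b (n - 1) lm y
      = ∑ k ∈ Finset.range n, ((cfac a k : ℝ) : ℂ) * (phi b k).eval lm * conj ((phi b k).eval y) := by
    unfold KkerPert phinPert
    rw [show n - 1 + 1 = n from Nat.succ_pred_eq_of_pos hn]
    apply Finset.sum_congr rfl
    intro k _
    simp only [eval_mul, eval_C, map_mul, Complex.conj_ofReal]
    unfold cfac
    push_cast
    ring
  -- CD at the root
  have hCDroot := CD_at_root a b habs n ha hlam0 hroot0
  -- derivative of the root equation
  have hDer := (hasDerivAt_phi a lam hL n).1
  have hzero : HasDerivAt (fun _ : ℝ => (0:ℂ))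
      ((Pd b n).1.eval lm + (derivative (phi b n)).eval lm * L) t₀ := by
    apply hDer.congr_of_eventuallyEq
    filter_upwards [Ioo_mem_nhds ht.1 ht.2] with s hs
    exact (hroot s hs).symm
  have hD0 : (Pd b n).1.eval lm + (derivative (phi b n)).eval lm * L = 0 :=
    ((hasDerivAt_const t₀ (0:ℂ)).unique hzero).symm
  -- U identity at the root
  have hU := congrArg (Polynomial.eval lm) (U_identity b n)
  simp only [eval_sub, eval_mul, eval_C, eval_pow, eval_X, hroot0, zero_mul, sub_zero,
    mul_zero, zero_sub] at hU
  rw [prod_one_sub_conj a t₀ n] at hU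
  have hprodC : ((cfac a n : ℝ) : ℂ)
      * (((∏ k ∈ Finset.Icc 1 n, (1 - ‖a k‖ ^ 2) : ℝ) : ℂ)) = 1 := by
    norm_cast
    exact_mod_cast cfac_prod a n ha
  have hkey : (KkerPert a b (n - 1) lm y * L) * lm ^ n = (Complex.I * lm) * lm ^ n := by
    rw [hK]
    linear_combination L * hCDroot
      + (((cfac a n : ℝ) : ℂ) * lm * ((revc (phi b n)).eval lm)) * hD0
      - (((cfac a n : ℝ) : ℂ) * lm) * hU
      + (Complex.I * lm ^ (n+1)) * hprodC
  have hmain : KkerPert a b (n - 1) lm y * L = Complex.I * lm :=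
    mul_right_cancel₀ (pow_ne_zero n hlam0) hkey
  refine ⟨hmain, fun hKne => ?_⟩
  field_simp at hmain ⊢
  linear_combination hmain
end
end

section
/- Let n ≥ 1 and let λ ∈ ℂ with λ ≠ 0. Then: (a) φ_n(λ) = 0 and φ*_n(λ) = 0 cannot both hold (φ_n and its reversed polynomial have no common nonzero zero); (b) if φ_n(λ) = 0, then K_{n−1}(λ, conj(λ)^{−1}) = 0 if and only if λ is a zero of φ_n of multiplicity at least 2. -/
open LaurentPolynomial Polynomial Complex ComplexConjugate

noncomputable section

namespace Aux


lemma map_conj_map_conj (p : Polynomial ℂ) :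
    (p.map (starRingEnd ℂ)).map (starRingEnd ℂ) = p := by
  rw [Polynomial.map_map]
  have h : (starRingEnd ℂ).comp (starRingEnd ℂ) = RingHom.id ℂ :=
    RingHom.ext fun z => Complex.conj_conj z
  rw [h, Polynomial.map_id]

lemma natDegree_map_conj (p : Polynomial ℂ) :
    (p.map (starRingEnd ℂ)).natDegree = p.natDegree :=
  Polynomial.natDegree_map_eq_of_injective (starRingEnd ℂ).injective p

lemma natDegree_revc_le (p : Polynomial ℂ) : (revc p).natDegree ≤ p.natDegree :=
  (Polynomial.reverse_natDegree_le _).trans (natDegree_map_conj p).le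

lemma phi_monic_natDegree (a : ℕ → ℂ) : ∀ n, (phi a n).Monic ∧ (phi a n).natDegree = n := by
  intro n
  induction n with
  | zero => exact ⟨monic_one, natDegree_one⟩
  | succ n ih =>
    obtain ⟨hm, hd⟩ := ih
    have h1 : (X * phi a n).Monic := monic_X.mul hm
    have hd1 : (X * phi a n).natDegree = n + 1 := by
      rw [natDegree_mul X_ne_zero hm.ne_zero, natDegree_X, hd, add_comm]
    have hlt : (Polynomial.C (a (n+1)) * revc (phi a n)).degree < (X * phi a n).degree := by
      have h2 : (revc (phi a n)).degree ≤ (n : WithBot ℕ) := by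
        refine le_trans (Polynomial.degree_le_natDegree) ?_
        exact_mod_cast (natDegree_revc_le _).trans hd.le
      have h3 : (Polynomial.C (a (n+1)) * revc (phi a n)).degree ≤ (n : WithBot ℕ) := by
        refine le_trans (Polynomial.degree_mul_le _ _) ?_
        calc (Polynomial.C (a (n+1))).degree + (revc (phi a n)).degree
            ≤ 0 + (n : WithBot ℕ) := add_le_add Polynomial.degree_C_le h2
          _ = (n : WithBot ℕ) := zero_add _
      refine lt_of_le_of_lt h3 ?_
      rw [Polynomial.degree_eq_natDegree h1.ne_zero, hd1]
      exact_mod_cast Nat.lt_succ_self n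
    constructor
    · show (X * phi a n + _).Monic
      exact h1.add_of_left hlt
    · show (X * phi a n + _).natDegree = n + 1
      rw [Polynomial.natDegree_add_eq_left_of_degree_lt hlt, hd1]

lemma reflect_reflect_succ (p : Polynomial ℂ) (n : ℕ) (hp : p.natDegree ≤ n) :
    reflect (n+1) (reflect n p) = X * p := by
  ext i
  rw [coeff_reflect, coeff_reflect]
  match i with
  | 0 =>
    rw [revAt_zero, revAt_eq_self_of_lt (Nat.lt_succ_self n)]
    rw [Polynomial.coeff_eq_zero_of_natDegree_lt (lt_of_le_of_lt hp (Nat.lt_succ_self n))]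
    simp [Polynomial.mul_coeff_zero]
  | j + 1 =>
    rw [Polynomial.coeff_X_mul]
    by_cases hj : j + 1 ≤ n + 1
    · rw [revAt_le hj]
      have hj' : j ≤ n := Nat.lt_succ_iff.mp hj
      have h1 : n + 1 - (j+1) = n - j := by omega
      have h2 : n - j ≤ n := Nat.sub_le n j
      rw [h1, revAt_le h2, Nat.sub_sub_self hj']
    · push_neg at hj
      have e1 : revAt (n+1) (j+1) = j+1 := revAt_eq_self_of_lt (by omega)
      rw [e1]
      have e2 : revAt n (j+1) = j+1 := revAt_eq_self_of_lt (by omega)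
      rw [e2]
      rw [Polynomial.coeff_eq_zero_of_natDegree_lt (show p.natDegree < j+1 by omega),
        Polynomial.coeff_eq_zero_of_natDegree_lt (show p.natDegree < j by omega)]

lemma revc_eq_reflect (a : ℕ → ℂ) (n : ℕ) :
    revc (phi a n) = reflect n ((phi a n).map (starRingEnd ℂ)) := by
  rw [revc, Polynomial.reverse, natDegree_map_conj, (phi_monic_natDegree a n).2]

lemma revc_succ (a : ℕ → ℂ) (n : ℕ) :
    revc (phi a (n+1)) = revc (phi a n) + Polynomial.C (conj (a (n+1))) * (X * phi a n) := by
  have hq : ((phi a n).map (starRingEnd ℂ)).natDegree = n := by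
    rw [natDegree_map_conj, (phi_monic_natDegree a n).2]
  have hmap : (phi a (n+1)).map (starRingEnd ℂ)
      = X * ((phi a n).map (starRingEnd ℂ))
        + Polynomial.C (conj (a (n+1))) * reflect n (phi a n) := by
    show (X * phi a n + Polynomial.C (a (n + 1)) * revc (phi a n)).map (starRingEnd ℂ) = _
    rw [Polynomial.map_add, Polynomial.map_mul, Polynomial.map_mul, Polynomial.map_X,
      Polynomial.map_C, revc_eq_reflect, ← Polynomial.reflect_map,
      map_conj_map_conj]
  rw [revc_eq_reflect a (n+1), hmap, Polynomial.reflect_add, Polynomial.reflect_C_mul]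
  congr 1
  · have : (n : ℕ) + 1 = 1 + n := by omega
    rw [this, Polynomial.reflect_mul X ((phi a n).map (starRingEnd ℂ)) (F := 1) (G := n)
      Polynomial.natDegree_X_le hq.le]
    have hX : reflect 1 (X : Polynomial ℂ) = 1 := by
      have h := Polynomial.reflect_monomial 1 1 (R := ℂ)
      rw [pow_one, revAt_le (le_refl 1)] at h
      simpa using h
    rw [hX, one_mul, revc_eq_reflect]
  · rw [reflect_reflect_succ _ n (phi_monic_natDegree a n).2.le]

lemma eval_reflect (p : Polynomial ℂ) (N : ℕ) (hp : p.natDegree ≤ N) {z : ℂ} (hz : z ≠ 0) :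
    (reflect N p).eval z = z ^ N * p.eval z⁻¹ := by
  letI : Invertible z⁻¹ := ⟨z, by field_simp, by field_simp⟩
  have h := Polynomial.eval₂_reflect_mul_pow (RingHom.id ℂ) z⁻¹ N p hp
  have hinv : (⅟ (z⁻¹) : ℂ) = z := rfl
  rw [hinv] at h
  have h' : (reflect N p).eval z * (z⁻¹) ^ N = p.eval z⁻¹ := h
  have hzN : z ^ N ≠ 0 := pow_ne_zero _ hz
  field_simp at h'
  rw [one_div] at h'
  rw [← h', mul_left_comm, ← mul_pow, mul_inv_cancel₀ hz, one_pow, mul_one]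

lemma conj_eval (p : Polynomial ℂ) (w : ℂ) :
    conj (p.eval (conj w)) = (p.map (starRingEnd ℂ)).eval w := by
  rw [Polynomial.eval_map]
  have := Polynomial.hom_eval₂ p (RingHom.id ℂ) (starRingEnd ℂ) (conj w)
  simpa using this


lemma revc_one : revc (1 : Polynomial ℂ) = 1 := by
  rw [revc, Polynomial.map_one, Polynomial.reverse, Polynomial.natDegree_one,
    Polynomial.reflect_one, pow_zero]

end Aux

/-- Remark 4.1: (a) φ_n and its reversed polynomial φ*_n have no
common nonzero zero; (b) for a nonzero zero λ of φ_n, the kernel value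
K_{n−1}(λ, conj(λ)⁻¹) vanishes iff λ is a multiple zero of φ_n. -/

theorem kernel_zero_iff_multiple_zero
    (a : ℕ → ℂ) (ha : ∀ n, 1 ≤ n → ‖a n‖ ≠ 1)
    (n : ℕ) (hn : 1 ≤ n) (lam : ℂ) (hlam : lam ≠ 0) :
    ¬((phi a n).eval lam = 0 ∧ (revc (phi a n)).eval lam = 0) ∧
    ((phi a n).eval lam = 0 →
      (Kker a (n - 1) lam ((conj lam)⁻¹) = 0 ↔
        2 ≤ Polynomial.rootMultiplicity lam (phi a n))) := by
  set P : ℕ → ℂ := fun k => (phi a k).eval lam with hPdef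
  set Q : ℕ → ℂ := fun k => (revc (phi a k)).eval lam with hQdef
  set P' : ℕ → ℂ := fun k => ((phi a k).derivative).eval lam with hP'def
  set Q' : ℕ → ℂ := fun k => ((revc (phi a k)).derivative).eval lam with hQ'def
  have hP : ∀ k, P (k+1) = lam * P k + a (k+1) * Q k := by
    intro k
    simp only [hPdef, hQdef, phi, Polynomial.eval_add, Polynomial.eval_mul,
      Polynomial.eval_X, Polynomial.eval_C]
  have hQ : ∀ k, Q (k+1) = Q k + conj (a (k+1)) * (lam * P k) := by
    intro k
    simp only [hQdef, hPdef, Aux.revc_succ, Polynomial.eval_add, Polynomial.eval_mul,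
      Polynomial.eval_X, Polynomial.eval_C]
  have hP' : ∀ k, P' (k+1) = P k + lam * P' k + a (k+1) * Q' k := by
    intro k
    simp only [hP'def, hPdef, hQ'def, phi, Polynomial.derivative_add,
      Polynomial.derivative_mul, Polynomial.derivative_X, Polynomial.derivative_C,
      Polynomial.eval_add, Polynomial.eval_mul, Polynomial.eval_X, Polynomial.eval_C,
      Polynomial.eval_one, zero_mul, one_mul, zero_add, add_zero]
  have hQ' : ∀ k, Q' (k+1) = Q' k + conj (a (k+1)) * (P k + lam * P' k) := by
    intro k
    simp only [hQ'def, hPdef, hP'def, Aux.revc_succ, Polynomial.derivative_add,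
      Polynomial.derivative_mul, Polynomial.derivative_X, Polynomial.derivative_C,
      Polynomial.eval_add, Polynomial.eval_mul, Polynomial.eval_X, Polynomial.eval_C,
      Polynomial.eval_one, zero_mul, one_mul, zero_add, add_zero]
  have hP0 : P 0 = 1 := by simp [hPdef, phi]
  have hQ0 : Q 0 = 1 := by simp [hQdef, phi, Aux.revc_one]
  have hP'0 : P' 0 = 0 := by simp [hP'def, phi]
  have hQ'0 : Q' 0 = 0 := by simp [hQ'def, phi, Aux.revc_one]
  have hx : ∀ k, 1 ≤ k → (1 - ‖a k‖^2 : ℝ) ≠ 0 := by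
    intro k hk h
    have h2 : (‖a k‖ - 1) * (‖a k‖ + 1) = 0 := by nlinarith
    rcases mul_eq_zero.mp h2 with h3 | h3
    · exact ha k hk (by linarith)
    · have := norm_nonneg (a k); linarith
  have hcC : ∀ k, 1 ≤ k → (1 : ℂ) - a k * conj (a k) ≠ 0 := by
    intro k hk
    have : (1 : ℂ) - a k * conj (a k) = ((1 - ‖a k‖^2 : ℝ) : ℂ) := by
      rw [Complex.mul_conj, ← Complex.sq_norm]
      push_cast
      ring
    rw [this]
    exact_mod_cast hx k hk
  -- Part (a)
  have haux : ∀ k, ¬(P k = 0 ∧ Q k = 0) := by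
    intro k
    induction k with
    | zero => rw [hP0, hQ0]; simp
    | succ k ih =>
      rintro ⟨h1, h2⟩
      rw [hP k] at h1
      rw [hQ k] at h2
      have hq : Q k = -(conj (a (k+1)) * (lam * P k)) := by linear_combination h2
      have h3 : lam * P k * (1 - a (k+1) * conj (a (k+1))) = 0 := by
        rw [hq] at h1; linear_combination h1
      have h4 : lam * P k = 0 := by
        rcases mul_eq_zero.mp h3 with h | h
        · exact h
        · exact absurd h (hcC (k+1) (by omega))
      have hPk : P k = 0 := by
        rcases mul_eq_zero.mp h4 with h | h
        · exact absurd h hlam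
        · exact h
      have hQk : Q k = 0 := by rw [hq, hPk]; ring
      exact ih ⟨hPk, hQk⟩
  have hrho : ∀ k, 1 ≤ k → rho a k ≠ 0 := by
    intro k hk
    rw [rho]
    exact Real.sqrt_ne_zero'.mpr (abs_pos.mpr (hx k hk))
  have hsgn_rho : ∀ k, sgn a k * (rho a k)^2 = 1 - ‖a k‖^2 := by
    intro k
    rw [sgn, rho, Real.sq_sqrt (abs_nonneg _)]
    rcases lt_trichotomy (1 - ‖a k‖^2) 0 with h | h | h
    · rw [Real.sign_of_neg h, abs_of_neg h]; ring
    · rw [h]; simp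
    · rw [Real.sign_of_pos h, abs_of_pos h]; ring
  have hsgn2 : ∀ k, 1 ≤ k → sgn a k * sgn a k = 1 := by
    intro k hk
    rcases Real.sign_apply_eq_of_ne_zero _ (hx k hk) with h | h <;> rw [sgn, h] <;> norm_num
  have he0 : esgn a 0 = 1 := by simp [esgn]
  have hk0 : kap a 0 = 1 := by simp [kap]
  have hesucc : ∀ m, esgn a (m+1) = esgn a m * sgn a (m+1) := by
    intro m
    rw [esgn, esgn, Finset.prod_Icc_succ_top (by omega : 1 ≤ m + 1)]
  have hksucc : ∀ m, kap a (m+1) = kap a m * (rho a (m+1))⁻¹ := by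
    intro m
    rw [kap, kap, Finset.prod_Icc_succ_top (by omega : 1 ≤ m + 1)]
  have hCreal : ∀ m, esgn a (m+1) * (kap a (m+1))^2 * (1 - ‖a (m+1)‖^2)
      = esgn a m * (kap a m)^2 := by
    intro m
    rw [hesucc, hksucc, ← hsgn_rho (m+1)]
    have hr := hrho (m+1) (by omega)
    have heq : esgn a m * sgn a (m+1) * (kap a m * (rho a (m+1))⁻¹)^2
        * (sgn a (m+1) * rho a (m+1)^2)
        = esgn a m * (kap a m)^2 * (sgn a (m+1) * sgn a (m+1))
          * ((rho a (m+1))⁻¹ * rho a (m+1))^2 := by ring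
    rw [heq, hsgn2 (m+1) (by omega), inv_mul_cancel₀ hr]
    ring
  have hC : ∀ m, ((esgn a (m+1) : ℝ) : ℂ) * ((kap a (m+1) : ℝ) : ℂ)^2
      * (1 - a (m+1) * conj (a (m+1))) = ((esgn a m : ℝ) : ℂ) * ((kap a m : ℝ) : ℂ)^2 := by
    intro m
    have h1 : (1 : ℂ) - a (m+1) * conj (a (m+1))
        = ((1 - ‖a (m+1)‖^2 : ℝ) : ℂ) := by
      rw [Complex.mul_conj, ← Complex.sq_norm]
      push_cast
      ring
    rw [h1]
    exact_mod_cast congrArg (fun x : ℝ => (x : ℂ)) (hCreal m)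
  have hW : ∀ m, P' (m+1) * Q (m+1) - P (m+1) * Q' (m+1)
      = (1 - a (m+1) * conj (a (m+1)))
        * (P m * Q m + lam * (P' m * Q m - P m * Q' m)) := by
    intro m
    rw [hP, hQ, hP', hQ']
    ring
  -- the master summation identity
  have hkey : ∀ m, 1 ≤ m →
      (∑ k ∈ Finset.range m,
        ((esgn a k : ℝ) : ℂ) * ((kap a k : ℝ) : ℂ)^2 * lam^(m-1-k) * (P k * Q k))
      = ((esgn a m : ℝ) : ℂ) * ((kap a m : ℝ) : ℂ)^2
        * (P' m * Q m - P m * Q' m) := by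
    intro m hm
    induction m, hm using Nat.le_induction with
    | base =>
      have h := hC 0
      rw [he0, hk0] at h
      push_cast at h
      rw [Finset.sum_range_one, he0, hk0, hP0, hQ0, hW 0, hP0, hQ0, hP'0, hQ'0]
      push_cast
      norm_num
      linear_combination -h
    | succ m hm ih =>
      rw [Finset.sum_range_succ]
      simp only [Nat.add_sub_cancel]
      have hsum : (∑ k ∈ Finset.range m,
          ((esgn a k : ℝ) : ℂ) * ((kap a k : ℝ) : ℂ)^2 * lam^(m-k) * (P k * Q k))
          = lam * ∑ k ∈ Finset.range m,
            ((esgn a k : ℝ) : ℂ) * ((kap a k : ℝ) : ℂ)^2 * lam^(m-1-k) * (P k * Q k) := by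
        rw [Finset.mul_sum]
        apply Finset.sum_congr rfl
        intro k hk
        have hk' : k < m := Finset.mem_range.mp hk
        have he : m - k = (m - 1 - k) + 1 := by omega
        rw [he, pow_succ]
        ring
      rw [hsum, ih, hW m, Nat.sub_self, pow_zero]
      linear_combination -(P m * Q m + lam * (P' m * Q m - P m * Q' m)) * hC m
  -- coefficients are nonzero
  have hene : ∀ m, ((esgn a m : ℝ) : ℂ) ≠ 0 := by
    intro m
    simp only [ne_eq, Complex.ofReal_eq_zero, esgn]
    rw [Finset.prod_eq_zero_iff]
    rintro ⟨k, hk, hk0⟩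
    have h1 : 1 ≤ k := (Finset.mem_Icc.mp hk).1
    exact hx k h1 (Real.sign_eq_zero_iff.mp hk0)
  have hkne : ∀ m, ((kap a m : ℝ) : ℂ) ≠ 0 := by
    intro m
    simp only [ne_eq, Complex.ofReal_eq_zero, kap]
    rw [Finset.prod_eq_zero_iff]
    rintro ⟨k, hk, hk0⟩
    have h1 : 1 ≤ k := (Finset.mem_Icc.mp hk).1
    exact hrho k h1 (inv_eq_zero.mp hk0)
  refine ⟨haux n, ?_⟩
  intro hroot
  have hphine : phi a n ≠ 0 := (Aux.phi_monic_natDegree a n).1.ne_zero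
  have hker : lam^(n-1) * Kker a (n-1) lam ((conj lam)⁻¹)
      = ∑ k ∈ Finset.range n,
        ((esgn a k : ℝ) : ℂ) * ((kap a k : ℝ) : ℂ)^2 * lam^(n-1-k) * (P k * Q k) := by
    rw [Kker]
    have hn1 : n - 1 + 1 = n := by omega
    rw [hn1, Finset.mul_sum]
    apply Finset.sum_congr rfl
    intro k hk
    have hk' : k < n := Finset.mem_range.mp hk
    have h1 : (conj lam)⁻¹ = conj lam⁻¹ := (map_inv₀ (starRingEnd ℂ) lam).symm
    have h2 : conj ((phin a k).eval ((conj lam)⁻¹))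
        = ((kap a k : ℝ) : ℂ) * ((phi a k).map (starRingEnd ℂ)).eval lam⁻¹ := by
      rw [h1, Aux.conj_eval, phin, Polynomial.map_mul, Polynomial.map_C,
        Polynomial.eval_mul, Polynomial.eval_C]
      simp [Complex.conj_ofReal]
    have h3 : Q k = lam^k * ((phi a k).map (starRingEnd ℂ)).eval lam⁻¹ := by
      rw [hQdef]
      show (revc (phi a k)).eval lam = _
      rw [Aux.revc_eq_reflect]
      exact Aux.eval_reflect _ k (by rw [Aux.natDegree_map_conj, (Aux.phi_monic_natDegree a k).2]) hlam
    have h4 : lam^(n-1) = lam^(n-1-k) * lam^k := by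
      rw [← pow_add]
      congr 1
      omega
    rw [h2, phin, Polynomial.eval_mul, Polynomial.eval_C, h4, h3]
    show lam ^ (n - 1 - k) * lam ^ k *
        (((esgn a k : ℝ) : ℂ) * (((kap a k : ℝ) : ℂ) * P k) *
          (((kap a k : ℝ) : ℂ) * ((phi a k).map (starRingEnd ℂ)).eval lam⁻¹)) = _
    ring
  have hfin : lam^(n-1) * Kker a (n-1) lam ((conj lam)⁻¹)
      = ((esgn a n : ℝ) : ℂ) * ((kap a n : ℝ) : ℂ)^2 * (P' n * Q n) := by
    rw [hker, hkey n hn, show P n = 0 from hroot]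
    ring
  have hQn : Q n ≠ 0 := fun h => haux n ⟨hroot, h⟩
  have hcoef : ((esgn a n : ℝ) : ℂ) * ((kap a n : ℝ) : ℂ)^2 ≠ 0 :=
    mul_ne_zero (hene n) (pow_ne_zero _ (hkne n))
  have hmain : Kker a (n-1) lam ((conj lam)⁻¹) = 0 ↔ P' n = 0 := by
    constructor
    · intro h
      have h2 : ((esgn a n : ℝ) : ℂ) * ((kap a n : ℝ) : ℂ)^2 * (P' n * Q n) = 0 := by
        rw [← hfin, h, mul_zero]
      have h3 := (mul_eq_zero.mp h2).resolve_left hcoef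
      exact (mul_eq_zero.mp h3).resolve_right hQn
    · intro h
      have h2 : lam^(n-1) * Kker a (n-1) lam ((conj lam)⁻¹) = 0 := by
        rw [hfin, h]
        ring
      exact (mul_eq_zero.mp h2).resolve_left (pow_ne_zero _ hlam)
  rw [hmain]
  rw [show (2 : ℕ) ≤ (phi a n).rootMultiplicity lam ↔ 1 < (phi a n).rootMultiplicity lam from
    Iff.rfl]
  rw [Polynomial.one_lt_rootMultiplicity_iff_isRoot hphine]
  constructor
  · intro h
    exact ⟨hroot, h⟩
  · rintro ⟨-, h⟩
    exact h
end
end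

section
/- Let n ≥ 1 and let λ ∈ ℂ with λ ≠ 0 and φ_n(λ) = 0. Then K_{n−1}(λ, conj(λ)^{−1}) = e_n · λ^{1−n} · φ̂_n'(λ) · φ̂*_n(λ), where φ̂_n' is the derivative of the orthonormal polynomial φ̂_n. -/
open LaurentPolynomial Polynomial Complex ComplexConjugate

noncomputable section

namespace CDaux

lemma mapc_mapc (p : Polynomial ℂ) : (p.map (starRingEnd ℂ)).map (starRingEnd ℂ) = p := by
  ext i; simp [coeff_map]

lemma natDegree_mapc (p : Polynomial ℂ) :
    (p.map (starRingEnd ℂ)).natDegree = p.natDegree :=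
  natDegree_map_eq_of_injective (RingHom.injective _) p

lemma natDegree_revc_le (p : Polynomial ℂ) : (revc p).natDegree ≤ p.natDegree :=
  (reverse_natDegree_le _).trans (natDegree_mapc p).le

lemma monic_phi (a : ℕ → ℂ) : ∀ n, (phi a n).Monic ∧ (phi a n).natDegree = n := by
  intro n
  induction n with
  | zero => exact ⟨monic_one, natDegree_one⟩
  | succ n ih =>
    obtain ⟨hm, hd⟩ := ih
    have hXm : (X * phi a n).Monic := monic_X.mul hm
    have hXd : (X * phi a n).natDegree = n + 1 := by
      rw [monic_X.natDegree_mul hm, hd, natDegree_X]; omega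
    have hlt : (Polynomial.C (a (n + 1)) * revc (phi a n)).degree < (X * phi a n).degree := by
      have h1 : (Polynomial.C (a (n + 1)) * revc (phi a n)).natDegree ≤ n := by
        refine (natDegree_mul_le).trans ?_
        simpa [natDegree_C] using (natDegree_revc_le (phi a n)).trans hd.le
      have h2 : (Polynomial.C (a (n + 1)) * revc (phi a n)).degree ≤ (n : WithBot ℕ) :=
        degree_le_natDegree.trans (by exact_mod_cast h1)
      have h3 : (X * phi a n).degree = ((n + 1 : ℕ) : WithBot ℕ) := by
        rw [Polynomial.degree_eq_natDegree hXm.ne_zero, hXd]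
      rw [h3]
      exact h2.trans_lt (by exact_mod_cast Nat.lt_succ_self n)
    constructor
    · exact hXm.add_of_left hlt
    · show (X * phi a n + _).natDegree = n + 1
      rw [natDegree_eq_of_degree_eq (degree_add_eq_left_of_degree_lt hlt), hXd]

lemma reflect_reflect_succ (p : Polynomial ℂ) (n : ℕ) (h : p.natDegree ≤ n) :
    reflect (n + 1) (reflect n p) = X * p := by
  ext i
  rw [coeff_reflect, coeff_reflect]
  rcases i with _ | j
  · rw [revAt_zero, revAt_eq_self_of_lt (by omega)]
    simp [coeff_eq_zero_of_natDegree_lt (by omega : p.natDegree < n + 1), mul_coeff_zero]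
  · by_cases hj : j + 1 ≤ n + 1
    · rw [revAt_le hj, revAt_le (by omega : n + 1 - (j + 1) ≤ n), coeff_X_mul]
      congr 1; omega
    · rw [revAt_eq_self_of_lt (show n + 1 < j + 1 by omega),
        revAt_eq_self_of_lt (show n < j + 1 by omega), coeff_X_mul]
      rw [coeff_eq_zero_of_natDegree_lt (by omega), coeff_eq_zero_of_natDegree_lt (by omega)]

lemma revc_eq_reflect (p : Polynomial ℂ) :
    revc p = reflect p.natDegree (p.map (starRingEnd ℂ)) := by
  rw [revc, reverse, natDegree_mapc]

lemma revc_one : revc 1 = 1 := by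
  rw [revc, Polynomial.map_one, reverse, natDegree_one, reflect_one]
  simp

lemma revc_phi_zero (a : ℕ → ℂ) : revc (phi a 0) = 1 := revc_one

lemma revc_phi_succ (a : ℕ → ℂ) (n : ℕ) :
    revc (phi a (n + 1)) =
      revc (phi a n) + Polynomial.C (conj (a (n + 1))) * (X * phi a n) := by
  obtain ⟨hm, hd⟩ := monic_phi a n
  obtain ⟨hm1, hd1⟩ := monic_phi a (n + 1)
  have hstep : phi a (n + 1) = X * phi a n + Polynomial.C (a (n + 1)) * revc (phi a n) := rfl
  rw [revc_eq_reflect, hd1, hstep, Polynomial.map_add, Polynomial.map_mul, Polynomial.map_mul,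
    Polynomial.map_X, map_C, reflect_add, reflect_C_mul]
  have t1 : reflect (n + 1) (X * (phi a n).map (starRingEnd ℂ)) = revc (phi a n) := by
    have := reflect_mul (X : Polynomial ℂ) ((phi a n).map (starRingEnd ℂ))
      (natDegree_X_le) (by rw [natDegree_mapc, hd])
    rw [show (1 : ℕ) + n = n + 1 from by omega] at this
    rw [this, reflect_one_X, one_mul, revc_eq_reflect, hd]
  have t2 : (revc (phi a n)).map (starRingEnd ℂ) = reflect n (phi a n) := by
    rw [revc_eq_reflect, hd, ← reflect_map, mapc_mapc]
  rw [t1, t2, reflect_reflect_succ _ _ hd.le]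


lemma wronskian_rec (a : ℕ → ℂ) (n : ℕ) :
    derivative (phi a (n + 1)) * revc (phi a (n + 1)) -
      phi a (n + 1) * derivative (revc (phi a (n + 1))) =
    Polynomial.C (1 - a (n + 1) * conj (a (n + 1))) *
      (phi a n * revc (phi a n) +
        X * (derivative (phi a n) * revc (phi a n) -
          phi a n * derivative (revc (phi a n)))) := by
  have hstep : phi a (n + 1) = X * phi a n + Polynomial.C (a (n + 1)) * revc (phi a n) := rfl
  rw [revc_phi_succ, hstep]
  simp only [derivative_add, derivative_mul, derivative_X, derivative_C, zero_mul, add_zero,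
    zero_add, one_mul, map_sub, map_mul, map_one]
  ring

lemma one_sub_sq_ne {w : ℂ} (h : ‖w‖ ≠ 1) : 1 - ‖w‖ ^ 2 ≠ 0 := by
  intro h0
  apply h
  have h1 : (‖w‖ - 1) * (‖w‖ + 1) = 0 := by ring_nf; linarith
  rcases mul_eq_zero.mp h1 with h2 | h2
  · linarith
  · have := norm_nonneg w; linarith

lemma rho_ne (a : ℕ → ℂ) {k : ℕ} (h : ‖a k‖ ≠ 1) : rho a k ≠ 0 := by
  have : 0 < |1 - ‖a k‖ ^ 2| := abs_pos.mpr (one_sub_sq_ne h)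
  exact ne_of_gt (Real.sqrt_pos.mpr this)

lemma kap_ne (a : ℕ → ℂ) (ha : ∀ n, 1 ≤ n → ‖a n‖ ≠ 1) (n : ℕ) :
    kap a n ≠ 0 := by
  rw [kap]
  apply Finset.prod_ne_zero_iff.mpr
  intro k hk
  exact inv_ne_zero (rho_ne a (ha k (Finset.mem_Icc.mp hk).1))

lemma cc_succ (a : ℕ → ℂ) (n : ℕ) (h : ‖a (n + 1)‖ ≠ 1) :
    ((esgn a (n + 1) * kap a (n + 1) ^ 2 : ℝ) : ℂ) * (1 - a (n + 1) * conj (a (n + 1))) =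
      ((esgn a n * kap a n ^ 2 : ℝ) : ℂ) := by
  have hmc : a (n + 1) * conj (a (n + 1)) = ((‖a (n + 1)‖ ^ 2 : ℝ) : ℂ) := by
    rw [Complex.mul_conj, Complex.sq_norm]
  rw [hmc, show (1 : ℂ) - ((‖a (n + 1)‖ ^ 2 : ℝ) : ℂ) =
    (((1 - ‖a (n + 1)‖ ^ 2 : ℝ)) : ℂ) from by push_cast; ring, ← Complex.ofReal_mul]
  congr 1
  set T : ℝ := 1 - ‖a (n + 1)‖ ^ 2 with hT
  have hT0 : T ≠ 0 := one_sub_sq_ne h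
  have hE : esgn a (n + 1) = esgn a n * sgn a (n + 1) := by
    rw [esgn, esgn, Finset.prod_Icc_succ_top (by omega)]
  have hK : kap a (n + 1) = kap a n * (rho a (n + 1))⁻¹ := by
    rw [kap, kap, Finset.prod_Icc_succ_top (by omega)]
  have hr2 : rho a (n + 1) ^ 2 = |T| := Real.sq_sqrt (abs_nonneg T)
  have hrne : rho a (n + 1) ≠ 0 := rho_ne a h
  have hsT : sgn a (n + 1) * T = |T| := by
    rcases lt_trichotomy T 0 with h1 | h1 | h1
    · rw [sgn, ← hT, Real.sign_of_neg h1, abs_of_neg h1]; ring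
    · exact absurd h1 hT0
    · rw [sgn, ← hT, Real.sign_of_pos h1, abs_of_pos h1]; ring
  rw [hE, hK]
  field_simp
  rw [mul_comm (esgn a n) (sgn a (n+1)), mul_assoc, mul_assoc]
  calc sgn a (n+1) * (esgn a n * (kap a n ^ 2 * T))
      = (sgn a (n+1) * T) * (esgn a n * kap a n ^ 2) := by ring
    _ = esgn a n * kap a n ^ 2 * rho a (n+1) ^ 2 := by rw [hsT, ← hr2]; ring


lemma key (a : ℕ → ℂ) (ha : ∀ n, 1 ≤ n → ‖a n‖ ≠ 1) (n : ℕ) :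
    Polynomial.C ((esgn a n * kap a n ^ 2 : ℝ) : ℂ) *
      (derivative (phi a n) * revc (phi a n) - phi a n * derivative (revc (phi a n))) =
    ∑ k ∈ Finset.range n, X ^ (n - 1 - k) *
      (Polynomial.C ((esgn a k * kap a k ^ 2 : ℝ) : ℂ) * (phi a k * revc (phi a k))) := by
  induction n with
  | zero => simp [show phi a 0 = 1 from rfl, revc_one]
  | succ n ih =>
    rw [wronskian_rec, ← mul_assoc, ← C_mul, cc_succ a n (ha (n + 1) (by omega)),
      show ∀ (c P W : Polynomial ℂ), c * (P + X * W) = c * P + X * (c * W) from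
        fun c P W => by ring,
      ih, Finset.mul_sum, Finset.sum_range_succ,
      show n + 1 - 1 - n = 0 from by omega, pow_zero, one_mul, add_comm]
    refine congrArg₂ (· + ·) ?_ rfl
    apply Finset.sum_congr rfl
    intro k hk
    have hk' := Finset.mem_range.mp hk
    rw [show n + 1 - 1 - k = (n - 1 - k) + 1 from by omega, pow_succ]
    ring

lemma eval_reflect (p : Polynomial ℂ) (N : ℕ) (h : p.natDegree ≤ N) {z : ℂ} (hz : z ≠ 0) :
    (reflect N p).eval z = z ^ N * p.eval z⁻¹ := by
  have : Invertible (z⁻¹ : ℂ) := invertibleOfNonzero (inv_ne_zero hz)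
  have h2 := eval₂_reflect_mul_pow (RingHom.id ℂ) z⁻¹ N p h
  rw [invOf_eq_inv, inv_inv] at h2
  have hzN : (z : ℂ) ^ N ≠ 0 := pow_ne_zero _ hz
  have h3 : (reflect N p).eval z * (z⁻¹) ^ N = p.eval z⁻¹ := h2
  calc (reflect N p).eval z = ((reflect N p).eval z * (z⁻¹) ^ N) * z ^ N := by
        rw [inv_pow]; field_simp
    _ = z ^ N * p.eval z⁻¹ := by rw [h3]; ring

lemma eval_mapc (p : Polynomial ℂ) (w : ℂ) :
    (p.map (starRingEnd ℂ)).eval (conj w) = conj (p.eval w) := by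
  rw [eval_map]
  exact eval₂_at_apply _ w

lemma eval_revc (p : Polynomial ℂ) {z : ℂ} (hz : z ≠ 0) :
    (revc p).eval z = z ^ p.natDegree * conj (p.eval ((conj z)⁻¹)) := by
  rw [revc_eq_reflect, eval_reflect _ _ (natDegree_mapc p).le hz,
    show (z⁻¹ : ℂ) = conj ((conj z)⁻¹) from by rw [map_inv₀, Complex.conj_conj],
    eval_mapc]

lemma revc_C_mul_real (r : ℝ) (hr : r ≠ 0) (p : Polynomial ℂ) :
    revc (Polynomial.C (r : ℂ) * p) = Polynomial.C (r : ℂ) * revc p := by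
  have hrc : ((r : ℂ)) ≠ 0 := by exact_mod_cast hr
  rw [revc, Polynomial.map_mul, map_C, Complex.conj_ofReal, revc, reverse, reverse,
    natDegree_C_mul hrc, reflect_C_mul]

lemma pow_aux {z : ℂ} (hz : z ≠ 0) {n k : ℕ} (hk : k < n) :
    z ^ ((1 : ℤ) - n) * z ^ (n - 1 - k) = (z ^ k)⁻¹ := by
  have h1 : ((1 : ℤ) - n) = -((n - 1 : ℕ) : ℤ) := by omega
  rw [h1, zpow_neg, zpow_natCast]
  have hzk : z ^ k ≠ 0 := pow_ne_zero _ hz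
  have hzn : z ^ (n - 1) ≠ 0 := pow_ne_zero _ hz
  field_simp
  rw [← pow_add]
  congr 1
  omega

end CDaux

/-- relation (4.1): if λ ≠ 0 is a zero of φ_n, then
K_{n−1}(λ, conj(λ)⁻¹) = e_n λ^{1−n} φ̂_n'(λ) φ̂*_n(λ). -/
theorem kernel_eval_at_zero_of_phi
    (a : ℕ → ℂ) (ha : ∀ n, 1 ≤ n → ‖a n‖ ≠ 1)
    (n : ℕ) (hn : 1 ≤ n) (lam : ℂ) (hlam : lam ≠ 0)
    (hroot : (phi a n).eval lam = 0) :
    Kker a (n - 1) lam ((conj lam)⁻¹) =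
      ((esgn a n : ℝ) : ℂ) * lam ^ ((1 : ℤ) - n) *
        ((Polynomial.derivative (phin a n)).eval lam) * ((revc (phin a n)).eval lam) := by
  have hkap : ∀ k, kap a k ≠ 0 := CDaux.kap_ne a ha
  have hdphin : ∀ k, (phin a k).natDegree = k := fun k => by
    rw [phin, natDegree_C_mul (show ((kap a k : ℝ) : ℂ) ≠ 0 by exact_mod_cast hkap k),
      (CDaux.monic_phi a k).2]
  rw [Kker, show n - 1 + 1 = n from by omega]
  have hterm : ∀ k ∈ Finset.range n,
      ((esgn a k : ℝ) : ℂ) * (phin a k).eval lam * conj ((phin a k).eval ((conj lam)⁻¹))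
      = (lam ^ k)⁻¹ *
        (((esgn a k * kap a k ^ 2 : ℝ) : ℂ) *
          ((phi a k).eval lam * (revc (phi a k)).eval lam)) := by
    intro k hk
    have h1 := CDaux.eval_revc (phin a k) hlam
    rw [hdphin k] at h1
    have hzk : (lam : ℂ) ^ k ≠ 0 := pow_ne_zero _ hlam
    have h2 : conj ((phin a k).eval ((conj lam)⁻¹))
        = (lam ^ k)⁻¹ * (revc (phin a k)).eval lam := by
      rw [h1]; field_simp
    rw [h2, phin, CDaux.revc_C_mul_real _ (hkap k)]
    simp only [eval_mul, eval_C]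
    push_cast
    ring
  rw [Finset.sum_congr rfl hterm]
  have hkey := congrArg (Polynomial.eval lam) (CDaux.key a ha n)
  simp only [eval_mul, eval_sub, eval_finset_sum, eval_pow, eval_X, eval_C, hroot,
    zero_mul, sub_zero] at hkey
  rw [phin, CDaux.revc_C_mul_real _ (hkap n), derivative_C_mul]
  simp only [eval_mul, eval_C]
  have hR : ((esgn a n : ℝ) : ℂ) * lam ^ ((1 : ℤ) - n) *
      (((kap a n : ℝ) : ℂ) * (derivative (phi a n)).eval lam) *
      (((kap a n : ℝ) : ℂ) * (revc (phi a n)).eval lam)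
      = lam ^ ((1 : ℤ) - n) * (((esgn a n * kap a n ^ 2 : ℝ) : ℂ) *
          ((derivative (phi a n)).eval lam * (revc (phi a n)).eval lam)) := by
    push_cast; ring
  rw [hR, hkey, Finset.mul_sum]
  apply Finset.sum_congr rfl
  intro k hk
  rw [← CDaux.pow_aux hlam (Finset.mem_range.mp hk), mul_assoc]
end
end
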